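/- Let λ_X be an injective function from the database D into the variable set X, and consider the semiring N^∞⟦X⟧ of formal power series over X with coefficients in N∪{∞}. Then (i) a monomial occurs (with nonzero coefficient) in AT(Σ,D,N^∞⟦X⟧,λ_X,α) if and only if it occurs in AM(Σ,D,N^∞⟦X⟧,λ_X,α); and (ii) SAM(Σ,D,N^∞⟦X⟧,λ_X,α) is exactly the series obtained from AT(Σ,D,N^∞⟦X⟧,λ_X,α) by replacing every nonzero coefficient by 1. -/

import Mathlib

attribute [local instance] Classical.propDecidable

namespace Datalog

/-- Terms are built from constants and variables. -/
inductive Term (C V : Type) : Type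
  | const : C → Term C V
  | var : V → Term C V

/-- An atom over predicates `P` with arguments of type `τ`. -/
structure Atom (P τ : Type) : Type where
  pred : P
  args : List τ

/-- A fact (ground atom) has constants as arguments. -/
abbrev Fact (P C : Type) := Atom P C

/-- Substitution of a variable assignment in a term. -/
def Term.subst {C : Type} {n : ℕ} (σ : Fin n → C) : Term C (Fin n) → C
  | Term.const c => c
  | Term.var v => σ v

/-- Substitution of a variable assignment in an atom, producing a fact. -/
def Atom.subst {P C : Type} {n : ℕ} (σ : Fin n → C) (a : Atom P (Term C (Fin n))) : Fact P C :=
  ⟨a.pred, a.args.map (Term.subst σ)⟩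

/-- Renaming of predicates in an atom. -/
def Atom.mapPred {P Q τ : Type} (f : P → Q) (a : Atom P τ) : Atom Q τ := ⟨f a.pred, a.args⟩

/-- Turn a fact into a (ground) rule atom. -/
def Atom.toRuleAtom {P C : Type} (n : ℕ) (a : Fact P C) : Atom P (Term C (Fin n)) :=
  ⟨a.pred, a.args.map Term.const⟩

/-- A (normalized) Datalog rule `φ(x⃗,y⃗) → H(x⃗)`: the body is a conjunction of atoms over
variables `x⃗ ∪ y⃗` (every variable of the rule occurs in the body), the head a single atom. -/
structure Rule (P C : Type) : Type where
  nvars : ℕ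
  nbody : ℕ
  body : Fin nbody → Atom P (Term C (Fin nvars))
  head : Atom P (Term C (Fin nvars))
  vars_in_body : ∀ v : Fin nvars, ∃ i : Fin nbody, Term.var v ∈ (body i).args

variable {P C K : Type}

/-- A set of facts is closed under the rules of a program. -/
def ClosedUnder (prog : Set (Rule P C)) (I : Set (Fact P C)) : Prop :=
  ∀ r ∈ prog, ∀ σ : Fin r.nvars → C,
    (∀ i, (r.body i).subst σ ∈ I) → r.head.subst σ ∈ I

/-- `Σ, D ⊨ α` : the fact `α` belongs to every set of facts containing `D`
and closed under the rules of `Σ`. -/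
def Entails (prog : Set (Rule P C)) (D : Set (Fact P C)) (a : Fact P C) : Prop :=
  ∀ I : Set (Fact P C), D ⊆ I → ClosedUnder prog I → a ∈ I

/-- Derivation trees of a fact w.r.t. a program and a database: leaves are labeled by facts of
`D`; an inner node is labeled by a rule `r ∈ Σ` together with a homomorphism `σ`, its children
corresponding bijectively to the body atoms of `r`, and derives the fact `σ(head r)`. -/
inductive DTree {P C : Type} (prog : Set (Rule P C)) (D : Set (Fact P C)) : Fact P C → Type
  | leaf (a : Fact P C) (ha : a ∈ D) : DTree prog D a
  | node (r : Rule P C) (hr : r ∈ prog) (σ : Fin r.nvars → C)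
      (children : ∀ i : Fin r.nbody, DTree prog D ((r.body i).subst σ)) :
      DTree prog D (r.head.subst σ)

namespace DTree

variable {prog : Set (Rule P C)} {D : Set (Fact P C)}

/-- `Λ(t)`: the product of the annotations of the leaves of `t`. -/
def weight [CommSemiring K] (lam : Fact P C → K) : ∀ {a : Fact P C}, DTree prog D a → K
  | _, .leaf a _ => lam a
  | _, .node r _ _ ch => ∏ i : Fin r.nbody, weight lam (ch i)

/-- The depth of a derivation tree. -/
def depth : ∀ {a : Fact P C}, DTree prog D a → ℕ
  | _, .leaf _ _ => 0
  | _, .node r _ _ ch => (Finset.univ.sup fun i : Fin r.nbody => depth (ch i)) + 1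

/-- A derivation tree of `a` is of minimal depth if no derivation tree of `a` is of
smaller depth. -/
def minimalDepth {a : Fact P C} (t : DTree prog D a) : Prop :=
  ∀ t' : DTree prog D a, t.depth ≤ t'.depth

/-- A derivation tree is hereditary minimal-depth if every subtree rooted at an inner node
is a minimal-depth derivation tree of the fact it derives. -/
def hereditaryMinimal : ∀ {a : Fact P C}, DTree prog D a → Prop
  | _, .leaf _ _ => True
  | _, .node r hr σ ch =>
      minimalDepth (.node r hr σ ch) ∧ ∀ i, hereditaryMinimal (ch i)

/-- `t.avoid s` : no fact labeling a node of `t` belongs to `s`, nor is repeated along a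
root-to-leaf path. -/
def avoid : Set (Fact P C) → ∀ {a : Fact P C}, DTree prog D a → Prop
  | s, _, .leaf a _ => a ∉ s
  | s, _, .node r _ σ ch =>
      r.head.subst σ ∉ s ∧ ∀ i, avoid (insert (r.head.subst σ) s) (ch i)

/-- A derivation tree is non-recursive if it does not contain two nodes labeled with the same
fact such that one is a descendant of the other. -/
def nonRecursive {a : Fact P C} (t : DTree prog D a) : Prop := t.avoid ∅

/-- `t.hasLeaf x` : `x` labels some leaf of `t`. -/
def hasLeaf (x : Fact P C) : ∀ {a : Fact P C}, DTree prog D a → Prop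
  | _, .leaf a _ => a = x
  | _, .node _ _ _ ch => ∃ i, hasLeaf x (ch i)

end DTree

/-- The finite partial sums of `f` over the set `S`. -/
def partialSums {T : Type} [AddCommMonoid K] (S : Set T) (f : T → K) : Set K :=
  { x | ∃ F : Finset T, ↑F ⊆ S ∧ x = ∑ t ∈ F, f t }

/-- The (possibly infinite) sum of `f` over `S`, i.e. the least upper bound of the finite
partial sums (junk value `0` if no least upper bound exists). -/
noncomputable def setSum {T : Type} [AddCommMonoid K] [PartialOrder K]
    (S : Set T) (f : T → K) : K :=
  if h : ∃ s, IsLUB (partialSums S f) s then h.choose else 0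

/-- The greatest lower bound of a set of semiring elements (junk value `0` if none exists). -/
noncomputable def setInf [Zero K] [PartialOrder K] (S : Set K) : K :=
  if h : ∃ z, IsGLB S z then h.choose else 0

/-- A commutative ω-continuous semiring: the natural order `a ≤ b ↔ ∃ c, a + c = b` is a
partial order, every ω-chain has a least upper bound, and `+` and `×` preserve these
least upper bounds. -/
class OmegaCommSemiring (K : Type) extends CommSemiring K, PartialOrder K where
  le_iff_exists_add : ∀ a b : K, a ≤ b ↔ ∃ c, a + c = b
  chain_lub : ∀ f : ℕ → K, Monotone f → ∃ s, IsLUB (Set.range f) s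
  add_lub : ∀ (f : ℕ → K) (a s : K), Monotone f → IsLUB (Set.range f) s →
    IsLUB (Set.range fun n => a + f n) (a + s)
  mul_lub : ∀ (f : ℕ → K) (a s : K), Monotone f → IsLUB (Set.range f) s →
    IsLUB (Set.range fun n => a * f n) (a * s)

/-- A positive semiring: a product is zero iff one factor is, a sum is zero iff both
summands are. -/
def PositiveSemiring (K : Type) [CommSemiring K] : Prop :=
  (∀ a b : K, a * b = 0 ↔ a = 0 ∨ b = 0) ∧ (∀ a b : K, a + b = 0 ↔ a = 0 ∧ b = 0)

/-- An annotated database: a set of facts together with an annotation function assigning a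
semiring element to every fact (`0` outside the database). -/
structure AnnDB (P C K : Type) [Zero K] : Type where
  facts : Set (Fact P C)
  ann : Fact P C → K
  ann_eq_zero : ∀ a ∉ facts, ann a = 0

/-- Union of two annotated databases: annotations are added pointwise. -/
noncomputable def AnnDB.union [AddCommMonoid K] (d₁ d₂ : AnnDB P C K) : AnnDB P C K where
  facts := d₁.facts ∪ d₂.facts
  ann a := d₁.ann a + d₂.ann a
  ann_eq_zero a ha := by
    show d₁.ann a + d₂.ann a = 0
    rw [d₁.ann_eq_zero a fun h => ha (Set.mem_union_left _ h),
      d₂.ann_eq_zero a fun h => ha (Set.mem_union_right _ h), add_zero]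

/-- The facts derivable from `I` by one application of a rule of `prog`. -/
def derivable (prog : Set (Rule P C)) (I : Set (Fact P C)) : Set (Fact P C) :=
  { a | ∃ r ∈ prog, ∃ σ : Fin r.nvars → C,
      (∀ i, (r.body i).subst σ ∈ I) ∧ r.head.subst σ = a }

/-- The relational provenance of the immediate consequences: the sum over all rules and
homomorphisms deriving `a` of the product of the annotations of the body facts. -/
noncomputable def ruleSum [CommSemiring K] (prog : Set (Rule P C)) (I : Set (Fact P C))
    (lam : Fact P C → K) (a : Fact P C) : K :=
  ∑ᶠ (p : (r : Rule P C) × (Fin r.nvars → C))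
      (_ : p.1 ∈ prog ∧ (∀ i, (p.1.body i).subst p.2 ∈ I) ∧ p.1.head.subst p.2 = a),
    ∏ i : Fin p.1.nbody, lam ((p.1.body i).subst p.2)

/-- The annotation-aware immediate consequence operator `T_Σ`. -/
noncomputable def Tcons [CommSemiring K] (prog : Set (Rule P C)) (db : AnnDB P C K) :
    AnnDB P C K where
  facts := derivable prog db.facts
  ann a := if a ∈ derivable prog db.facts then ruleSum prog db.facts db.ann a else 0
  ann_eq_zero a ha := if_neg ha

/-- The operator `Δ_Σ`: `T_Σ` restricted to the newly derived facts. -/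
noncomputable def Dcons [CommSemiring K] (prog : Set (Rule P C)) (db : AnnDB P C K) :
    AnnDB P C K where
  facts := (Tcons prog db).facts \ db.facts
  ann a := if a ∈ (Tcons prog db).facts \ db.facts then (Tcons prog db).ann a else 0
  ann_eq_zero a ha := if_neg ha

/-- The naive evaluation sequence `I_n^0 := (D,K,λ)`, `I_n^{i+1} := T_Σ(I_n^i) ∪ (D,K,λ)`. -/
noncomputable def naiveSeq [CommSemiring K] (prog : Set (Rule P C)) (db : AnnDB P C K) :
    ℕ → AnnDB P C K
  | 0 => db
  | i + 1 => (Tcons prog (naiveSeq prog db i)).union db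

/-- The naive execution provenance semantics: the least upper bound of the annotations of `a`
along the naive evaluation sequence (and `0` if `a` is never derived). -/
noncomputable def NE [CommSemiring K] [PartialOrder K] (prog : Set (Rule P C))
    (db : AnnDB P C K) (a : Fact P C) : K :=
  if ∃ i, a ∈ (naiveSeq prog db i).facts then
    (if h : ∃ s, IsLUB (Set.range fun i => (naiveSeq prog db i).ann a) s then h.choose else 0)
  else 0

/-- The optimized naive evaluation sequence, which stops as soon as the target fact is
derived. -/
noncomputable def optSeq [CommSemiring K] (prog : Set (Rule P C)) (db : AnnDB P C K)
    (target : Fact P C) : ℕ → AnnDB P C K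
  | 0 => db
  | i + 1 =>
      if target ∈ (optSeq prog db target i).facts then optSeq prog db target i
      else (Tcons prog (optSeq prog db target i)).union db

/-- The optimized execution provenance semantics: the annotation of the target fact at the
stabilization point of the optimized naive evaluation sequence. -/
noncomputable def OE [CommSemiring K] (prog : Set (Rule P C)) (db : AnnDB P C K)
    (target : Fact P C) : K :=
  if h : ∃ k, ∀ ℓ, k ≤ ℓ → optSeq prog db target ℓ = optSeq prog db target k then
    (optSeq prog db target h.choose).ann target
  else 0

/-- The seminaive evaluation sequence `I_sn^0 := (D,K,λ)`, `I_sn^{i+1} := I_sn^i ∪ Δ_Σ(I_sn^i)`. -/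
noncomputable def semiSeq [CommSemiring K] (prog : Set (Rule P C)) (db : AnnDB P C K) :
    ℕ → AnnDB P C K
  | 0 => db
  | i + 1 => (semiSeq prog db i).union (Dcons prog (semiSeq prog db i))

/-- The seminaive execution provenance semantics: the annotation of the fact at the
stabilization point of the seminaive evaluation sequence. -/
noncomputable def SNE [CommSemiring K] (prog : Set (Rule P C)) (db : AnnDB P C K)
    (a : Fact P C) : K :=
  if h : ∃ k, ∀ ℓ, k ≤ ℓ → semiSeq prog db ℓ = semiSeq prog db k then
    (semiSeq prog db h.choose).ann a
  else 0

/-- The all-tree provenance semantics `AT`: the (possibly infinite) sum, over all derivation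
trees of `a`, of the product of the annotations of the leaves. -/
noncomputable def AT [CommSemiring K] [PartialOrder K] (prog : Set (Rule P C))
    (db : AnnDB P C K) (a : Fact P C) : K :=
  setSum (Set.univ : Set (DTree prog db.facts a)) fun t => t.weight db.ann

/-- The non-recursive tree provenance semantics `NRT`. -/
noncomputable def NRT [CommSemiring K] (prog : Set (Rule P C)) (db : AnnDB P C K)
    (a : Fact P C) : K :=
  ∑ᶠ (t : DTree prog db.facts a) (_ : t.nonRecursive), t.weight db.ann

/-- The minimal depth tree provenance semantics `MDT`. -/
noncomputable def MDT [CommSemiring K] (prog : Set (Rule P C)) (db : AnnDB P C K)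
    (a : Fact P C) : K :=
  ∑ᶠ (t : DTree prog db.facts a) (_ : t.minimalDepth), t.weight db.ann

/-- The hereditary minimal depth tree provenance semantics `HMDT`. -/
noncomputable def HMDT [CommSemiring K] (prog : Set (Rule P C)) (db : AnnDB P C K)
    (a : Fact P C) : K :=
  ∑ᶠ (t : DTree prog db.facts a) (_ : t.hereditaryMinimal), t.weight db.ann

/-- `σ'` agrees with `σ` on the head variables of `r` (i.e. `h'(x⃗) = h(x⃗)`). -/
def headAgree (r : Rule P C) (σ σ' : Fin r.nvars → C) : Prop :=
  ∀ v : Fin r.nvars, Term.var v ∈ r.head.args → σ' v = σ v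

/-- A `K`-annotated interpretation `(I,μ)` is a model of `Σ` and `(D,K,λ)`. -/
def IsAnnModel [CommSemiring K] [PartialOrder K] (prog : Set (Rule P C)) (db : AnnDB P C K)
    (I : Set (Fact P C)) (μ : Fact P C → K) : Prop :=
  db.facts ⊆ I ∧ (∀ a ∈ db.facts, db.ann a ≤ μ a) ∧
  ∀ r ∈ prog, ∀ σ : Fin r.nvars → C, (∀ i, (r.body i).subst σ ∈ I) →
    r.head.subst σ ∈ I ∧
    setSum {σ' : Fin r.nvars → C | (∀ i, (r.body i).subst σ' ∈ I) ∧ headAgree r σ σ'}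
        (fun σ' => ∏ i : Fin r.nbody, μ ((r.body i).subst σ'))
      ≤ μ (r.head.subst σ)

/-- The annotated model-based provenance semantics `AM`: the greatest lower bound, over all
annotated models, of the annotation of `a` (and `0` if `a` is not entailed). -/
noncomputable def AM [CommSemiring K] [PartialOrder K] (prog : Set (Rule P C))
    (db : AnnDB P C K) (a : Fact P C) : K :=
  if Entails prog db.facts a then
    setInf { x | ∃ I μ, IsAnnModel prog db I μ ∧ μ a = x }
  else 0

/-- A `K`-set-annotated interpretation `(I,μ)` is a model of `Σ` and `(D,K,λ)`. -/
def IsSetAnnModel [CommSemiring K] (prog : Set (Rule P C)) (db : AnnDB P C K)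
    (I : Set (Fact P C)) (μ : Fact P C → Set K) : Prop :=
  db.facts ⊆ I ∧ (∀ a ∈ db.facts, db.ann a ∈ μ a) ∧
  ∀ r ∈ prog, ∀ σ : Fin r.nvars → C, (∀ i, (r.body i).subst σ ∈ I) →
    r.head.subst σ ∈ I ∧
    ∀ g : Fin r.nbody → K, (∀ i, g i ∈ μ ((r.body i).subst σ)) →
      (∏ i, g i) ∈ μ (r.head.subst σ)

/-- The set-annotated model-based provenance semantics `SAM`: the sum of the elements of the
intersection, over all set-annotated models, of the annotation set of `a`. -/
noncomputable def SAM [CommSemiring K] [PartialOrder K] (prog : Set (Rule P C))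
    (db : AnnDB P C K) (a : Fact P C) : K :=
  setSum { k : K | ∀ I μ, IsSetAnnModel prog db I μ → k ∈ μ a } id

/-- The schema of a program: the predicates occurring in its rules. -/
def progSchema (prog : Set (Rule P C)) : Set P :=
  { p | ∃ r ∈ prog, r.head.pred = p ∨ ∃ i, (r.body i).pred = p }

/-- The schema of a database: the predicates occurring in its facts. -/
def dbSchema (D : Set (Fact P C)) : Set P := { p | ∃ a ∈ D, a.pred = p }

/-- The domain of a database: the constants occurring in its facts. -/
def dbConsts (D : Set (Fact P C)) : Set C := { c | ∃ a ∈ D, c ∈ a.args }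

/-- A ground rule built from a list of facts (the body) and a fact (the head). -/
def factRule (body : List (Fact P C)) (head : Fact P C) : Rule P C where
  nvars := 0
  nbody := body.length
  body := fun i => (body.get i).toRuleAtom 0
  head := head.toRuleAtom 0
  vars_in_body := fun v => v.elim0

/-- A ground instance of a rule. -/
def Rule.ground (r : Rule P C) (σ : Fin r.nvars → C) : Rule P C where
  nvars := 0
  nbody := r.nbody
  body := fun i => ((r.body i).subst σ).toRuleAtom 0
  head := (r.head.subst σ).toRuleAtom 0
  vars_in_body := fun v => v.elim0

/-- The grounding `Σ_D` of a program w.r.t. the domain of a database. -/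
def grounding (prog : Set (Rule P C)) (D : Set (Fact P C)) : Set (Rule P C) :=
  { r' | ∃ r ∈ prog, ∃ σ : Fin r.nvars → C, (∀ v, σ v ∈ dbConsts D) ∧ r' = r.ground σ }

/-- Renaming of predicates in a rule. -/
def Rule.mapPred {Q : Type} (f : P → Q) (r : Rule P C) : Rule Q C where
  nvars := r.nvars
  nbody := r.nbody
  body := fun i => (r.body i).mapPred f
  head := r.head.mapPred f
  vars_in_body := fun v => r.vars_in_body v

/-- An adornment of a rule: exactly one body atom is adorned (sent to the `Sum.inr` copy of
the predicates), the head is adorned or not, all the other atoms keep their predicates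
(`Sum.inl` copy). -/
def adornRule (r : Rule P C) (i : Fin r.nbody) (adornHead : Bool) : Rule (P ⊕ P) C where
  nvars := r.nvars
  nbody := r.nbody
  body := fun j => if j = i then (r.body j).mapPred Sum.inr else (r.body j).mapPred Sum.inl
  head := if adornHead then r.head.mapPred Sum.inr else r.head.mapPred Sum.inl
  vars_in_body := by
    intro v
    obtain ⟨j, hj⟩ := r.vars_in_body v
    refine ⟨j, ?_⟩
    try dsimp only
    split <;> exact hj

/-- The set of adornments of a rule. -/
def adornedRules (r : Rule P C) : Set (Rule (P ⊕ P) C) :=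
  { r' | ∃ (i : Fin r.nbody) (b : Bool), r' = adornRule r i b }

noncomputable instance (X : Type) : PartialOrder (MvPowerSeries X ℕ∞) :=
  inferInstanceAs (PartialOrder ((X →₀ ℕ) → ℕ∞))

/-! ### Auxiliary material for `statement_2` -/

section Aux

open MvPowerSeries

variable {P C X : Type}

lemma ser_le_def {X : Type} {φ ψ : MvPowerSeries X ℕ∞} :
    φ ≤ ψ ↔ ∀ m, MvPowerSeries.coeff (R := ℕ∞) m φ ≤ MvPowerSeries.coeff (R := ℕ∞) m ψ := Iff.rfl

/-- Pointwise least upper bound of a set of power series. -/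
noncomputable def pLub {X : Type} (A : Set (MvPowerSeries X ℕ∞)) : MvPowerSeries X ℕ∞ :=
  fun m => sSup ((fun φ => MvPowerSeries.coeff (R := ℕ∞) m φ) '' A)

lemma isLUB_pLub {X : Type} (A : Set (MvPowerSeries X ℕ∞)) : IsLUB A (pLub A) := by
  constructor
  · intro φ hφ
    rw [ser_le_def]
    intro m
    exact le_sSup ⟨φ, hφ, rfl⟩
  · intro ψ hψ
    rw [ser_le_def]
    intro m
    refine sSup_le ?_
    rintro x ⟨φ, hφ, rfl⟩
    exact ser_le_def.mp (hψ hφ) m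

/-- Pointwise greatest lower bound of a set of power series. -/
noncomputable def pGlb {X : Type} (A : Set (MvPowerSeries X ℕ∞)) : MvPowerSeries X ℕ∞ :=
  fun m => sInf ((fun φ => MvPowerSeries.coeff (R := ℕ∞) m φ) '' A)

lemma isGLB_pGlb {X : Type} (A : Set (MvPowerSeries X ℕ∞)) : IsGLB A (pGlb A) := by
  constructor
  · intro φ hφ
    rw [ser_le_def]
    intro m
    exact sInf_le ⟨φ, hφ, rfl⟩
  · intro ψ hψ
    rw [ser_le_def]
    intro m
    refine le_sInf ?_
    rintro x ⟨φ, hφ, rfl⟩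
    exact ser_le_def.mp (hψ hφ) m

lemma isLUB_setSum {T : Type} (S : Set T) (f : T → MvPowerSeries X ℕ∞) :
    IsLUB (partialSums S f) (setSum S f) := by
  have h : ∃ s, IsLUB (partialSums S f) s := ⟨_, isLUB_pLub _⟩
  rw [setSum, dif_pos h]
  exact h.choose_spec

lemma isGLB_setInf (S : Set (MvPowerSeries X ℕ∞)) : IsGLB S (setInf S) := by
  have h : ∃ s, IsGLB S s := ⟨_, isGLB_pGlb _⟩
  rw [setInf, dif_pos h]
  exact h.choose_spec

lemma coeff_finsetSum {T : Type} (F : Finset T) (f : T → MvPowerSeries X ℕ∞) (m : X →₀ ℕ) :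
    MvPowerSeries.coeff (R := ℕ∞) m (∑ t ∈ F, f t) = ∑ t ∈ F, MvPowerSeries.coeff (R := ℕ∞) m (f t) :=
  map_sum _ _ _

lemma isLUB_coeff_setSum {T : Type} (S : Set T) (f : T → MvPowerSeries X ℕ∞) (m : X →₀ ℕ) :
    IsLUB (partialSums S fun t => MvPowerSeries.coeff (R := ℕ∞) m (f t))
      (MvPowerSeries.coeff (R := ℕ∞) m (setSum S f)) := by
  have he : setSum S f = pLub (partialSums S f) :=
    (isLUB_setSum S f).unique (isLUB_pLub _)
  rw [he]
  have h0 : MvPowerSeries.coeff (R := ℕ∞) m (pLub (partialSums S f)) =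
      sSup ((fun φ => MvPowerSeries.coeff (R := ℕ∞) m φ) '' partialSums S f) := rfl
  have himg : (fun φ => MvPowerSeries.coeff (R := ℕ∞) m φ) '' partialSums S f =
      partialSums S fun t => MvPowerSeries.coeff (R := ℕ∞) m (f t) := by
    ext x
    constructor
    · rintro ⟨φ, ⟨F, hF, rfl⟩, rfl⟩
      exact ⟨F, hF, (coeff_finsetSum F f m)⟩
    · rintro ⟨F, hF, rfl⟩
      exact ⟨∑ t ∈ F, f t, ⟨F, hF, rfl⟩, (coeff_finsetSum F f m)⟩
  rw [h0, himg]
  exact isLUB_sSup _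

lemma coeff_setSum_ne_zero_iff {T : Type} (S : Set T) (f : T → MvPowerSeries X ℕ∞)
    (m : X →₀ ℕ) :
    MvPowerSeries.coeff (R := ℕ∞) m (setSum S f) ≠ 0 ↔
      ∃ t ∈ S, MvPowerSeries.coeff (R := ℕ∞) m (f t) ≠ 0 := by
  have h := isLUB_coeff_setSum S f m
  constructor
  · intro hne
    by_contra hall
    push_neg at hall
    have hub : MvPowerSeries.coeff (R := ℕ∞) m (setSum S f) ≤ 0 := by
      refine h.2 ?_
      rintro x ⟨F, hF, rfl⟩
      have : ∀ t ∈ F, MvPowerSeries.coeff (R := ℕ∞) m (f t) = 0 := fun t ht => hall t (hF ht)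
      rw [Finset.sum_eq_zero this]
    exact hne (le_antisymm hub (zero_le))
  · rintro ⟨t, htS, hne⟩
    have hmem : MvPowerSeries.coeff (R := ℕ∞) m (f t) ∈
        partialSums S fun t => MvPowerSeries.coeff (R := ℕ∞) m (f t) := by
      refine ⟨{t}, ?_, ?_⟩
      · simpa using htS
      · simp
    have hle := h.1 hmem
    intro h0
    rw [h0] at hle
    exact hne (le_antisymm hle (zero_le))

lemma prod_monomial {ι : Type} (s : Finset ι) (d : ι → (X →₀ ℕ)) :
    (∏ i ∈ s, MvPowerSeries.monomial (R := ℕ∞) (d i) 1) =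
      MvPowerSeries.monomial (R := ℕ∞) (∑ i ∈ s, d i) 1 := by
  classical
  induction s using Finset.induction_on with
  | empty => simp [MvPowerSeries.monomial_zero_one]
  | insert _ _ h ih =>
      rw [Finset.prod_insert h, Finset.sum_insert h, ih, MvPowerSeries.monomial_mul_monomial,
        one_mul]

lemma coeff_prod_ne_zero_imp {n : ℕ} (φ : Fin n → MvPowerSeries X ℕ∞) (m : X →₀ ℕ)
    (h : MvPowerSeries.coeff (R := ℕ∞) m (∏ i, φ i) ≠ 0) :
    ∃ d : Fin n → (X →₀ ℕ), (∑ i, d i) = m ∧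
      ∀ i, MvPowerSeries.coeff (R := ℕ∞) (d i) (φ i) ≠ 0 := by
  classical
  rw [MvPowerSeries.coeff_prod] at h
  obtain ⟨l, hl, hne⟩ := Finset.exists_ne_zero_of_sum_ne_zero h
  refine ⟨fun i => l i, ?_, ?_⟩
  · have := (Finset.mem_finsuppAntidiag.mp hl).1
    simpa using this
  · intro i h0
    exact hne (Finset.prod_eq_zero (Finset.mem_univ i) h0)

lemma coeff_prod_ge {n : ℕ} (φ : Fin n → MvPowerSeries X ℕ∞) (d : Fin n → (X →₀ ℕ)) :
    (∏ i, MvPowerSeries.coeff (R := ℕ∞) (d i) (φ i)) ≤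
      MvPowerSeries.coeff (R := ℕ∞) (∑ i, d i) (∏ i, φ i) := by
  classical
  rw [MvPowerSeries.coeff_prod]
  have hmem : (Finsupp.equivFunOnFinite.symm d) ∈
      Finset.finsuppAntidiag (Finset.univ : Finset (Fin n)) (∑ i, d i) := by
    rw [Finset.mem_finsuppAntidiag]
    refine ⟨?_, Finset.subset_univ _⟩
    simp [Finsupp.equivFunOnFinite_symm_coe]
  have := Finset.single_le_sum
    (f := fun l : (Fin n) →₀ (X →₀ ℕ) => ∏ i, MvPowerSeries.coeff (R := ℕ∞) (l i) (φ i))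
    (fun l _ => zero_le) hmem
  simpa [Finsupp.equivFunOnFinite_symm_coe] using this

/-- The multidegree (exponent vector) of a derivation tree: each leaf contributes the
variable associated to its fact. -/
noncomputable def DTree.deg {prog : Set (Rule P C)} {D : Set (Fact P C)} (f : Fact P C → X) :
    ∀ {a : Fact P C}, DTree prog D a → (X →₀ ℕ)
  | _, .leaf a _ => Finsupp.single (f a) 1
  | _, .node r _ _ ch => ∑ i : Fin r.nbody, (ch i).deg f

lemma weight_eq_monomial {prog : Set (Rule P C)} (db : AnnDB P C (MvPowerSeries X ℕ∞))
    (f : Fact P C → X)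
    (hann : ∀ a ∈ db.facts, db.ann a = MvPowerSeries.X (f a)) :
    ∀ {a : Fact P C} (t : DTree prog db.facts a),
      t.weight db.ann = MvPowerSeries.monomial (R := ℕ∞) (t.deg f) 1 := by
  intro a t
  induction t with
  | leaf a ha =>
      rw [DTree.weight, DTree.deg, hann a ha, MvPowerSeries.X_def]
  | node r hr σ ch ih =>
      rw [DTree.weight, DTree.deg, ← prod_monomial]
      exact Finset.prod_congr rfl fun i _ => ih i

lemma tree_entails {prog : Set (Rule P C)} {D : Set (Fact P C)} :
    ∀ {a : Fact P C}, DTree prog D a → Entails prog D a := by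
  intro a t
  induction t with
  | leaf a ha => exact fun I hD _ => hD ha
  | node r hr σ ch ih => exact fun I hD hcl => hcl r hr σ fun i => ih i I hD hcl

lemma entails_tree {prog : Set (Rule P C)} {D : Set (Fact P C)} {a : Fact P C}
    (h : Entails prog D a) : Nonempty (DTree prog D a) :=
  h {b | Nonempty (DTree prog D b)} (fun b hb => ⟨.leaf b hb⟩)
    (fun r hr σ hb => ⟨.node r hr σ fun i => (hb i).some⟩)

lemma head_subst_eq {r : Rule P C} {σ σ' : Fin r.nvars → C} (h : headAgree r σ σ') :
    r.head.subst σ' = r.head.subst σ := by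
  unfold Atom.subst
  congr 1
  apply List.map_congr_left
  intro t ht
  cases t with
  | const c => rfl
  | var v => exact h v ht

lemma deg_cast {prog : Set (Rule P C)} {D : Set (Fact P C)} {a b : Fact P C}
    (h : a = b) (t : DTree prog D a) (f : Fact P C → X) :
    (h ▸ t : DTree prog D b).deg f = t.deg f := by
  cases h; rfl

/-- The canonical "⊤ on achievable monomials" annotation. -/
noncomputable def muTop (prog : Set (Rule P C)) (D : Set (Fact P C)) (f : Fact P C → X)
    (a : Fact P C) : MvPowerSeries X ℕ∞ :=
  fun m => if ∃ t : DTree prog D a, t.deg f = m then (⊤ : ℕ∞) else 0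

lemma coeff_muTop (prog : Set (Rule P C)) (D : Set (Fact P C)) (f : Fact P C → X)
    (a : Fact P C) (m : X →₀ ℕ) :
    MvPowerSeries.coeff (R := ℕ∞) m (muTop prog D f a) =
      if ∃ t : DTree prog D a, t.deg f = m then (⊤ : ℕ∞) else 0 := rfl

lemma coeff_AT_ne_zero_iff {prog : Set (Rule P C)} (db : AnnDB P C (MvPowerSeries X ℕ∞))
    (f : Fact P C → X)
    (hann : ∀ a ∈ db.facts, db.ann a = MvPowerSeries.X (f a)) (α : Fact P C) (m : X →₀ ℕ) :
    MvPowerSeries.coeff (R := ℕ∞) m (AT prog db α) ≠ 0 ↔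
      ∃ t : DTree prog db.facts α, t.deg f = m := by
  rw [AT, coeff_setSum_ne_zero_iff]
  constructor
  · rintro ⟨t, -, ht⟩
    refine ⟨t, ?_⟩
    rw [weight_eq_monomial db f hann t, MvPowerSeries.coeff_monomial] at ht
    by_contra hne
    rw [if_neg (fun h => hne h.symm)] at ht
    exact ht rfl
  · rintro ⟨t, ht⟩
    refine ⟨t, Set.mem_univ t, ?_⟩
    rw [weight_eq_monomial db f hann t, MvPowerSeries.coeff_monomial, if_pos ht.symm]
    exact one_ne_zero

lemma muTop_isAnnModel {prog : Set (Rule P C)} (db : AnnDB P C (MvPowerSeries X ℕ∞))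
    (f : Fact P C → X)
    (hann : ∀ a ∈ db.facts, db.ann a = MvPowerSeries.X (f a)) :
    IsAnnModel prog db {a | Nonempty (DTree prog db.facts a)}
      (muTop prog db.facts f) := by
  refine ⟨fun a ha => ⟨.leaf a ha⟩, ?_, ?_⟩
  · intro a ha
    rw [ser_le_def]
    intro m
    rw [hann a ha, MvPowerSeries.X_def, MvPowerSeries.coeff_monomial, coeff_muTop]
    by_cases hm : m = Finsupp.single (f a) 1
    · rw [if_pos hm, if_pos ⟨.leaf a ha, hm.symm⟩]
      exact le_top
    · rw [if_neg hm]
      exact zero_le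
  · intro r hr σ hbody
    refine ⟨⟨.node r hr σ fun i => (hbody i).some⟩, ?_⟩
    refine (isLUB_setSum _ _).2 ?_
    rintro x ⟨F, hF, rfl⟩
    rw [ser_le_def]
    intro m
    rw [coeff_finsetSum, coeff_muTop]
    by_cases hh : ∃ t : DTree prog db.facts (r.head.subst σ), t.deg f = m
    · rw [if_pos hh]; exact le_top
    · rw [if_neg hh]
      refine le_of_eq (Finset.sum_eq_zero ?_)
      intro σ' hσ'
      by_contra hne
      obtain ⟨d, hd, hdne⟩ := coeff_prod_ne_zero_imp _ m hne
      have hti : ∀ i, ∃ t : DTree prog db.facts ((r.body i).subst σ'), t.deg f = d i := by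
        intro i
        have := hdne i
        rw [coeff_muTop] at this
        by_contra hc
        rw [if_neg hc] at this
        exact this rfl
      choose t htd using hti
      obtain ⟨-, hagr⟩ := hF hσ'
      have hheq : r.head.subst σ' = r.head.subst σ := head_subst_eq hagr
      apply hh
      refine ⟨hheq ▸ DTree.node r hr σ' t, ?_⟩
      rw [deg_cast hheq (DTree.node r hr σ' t) f]
      show (∑ i, (t i).deg f) = m
      rw [← hd]
      exact Finset.sum_congr rfl fun i _ => htd i

lemma isAnnModel_tree {prog : Set (Rule P C)} (db : AnnDB P C (MvPowerSeries X ℕ∞))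
    (f : Fact P C → X)
    (hann : ∀ a ∈ db.facts, db.ann a = MvPowerSeries.X (f a))
    {I : Set (Fact P C)} {μ : Fact P C → MvPowerSeries X ℕ∞}
    (hM : IsAnnModel prog db I μ) :
    ∀ {a : Fact P C} (t : DTree prog db.facts a),
      a ∈ I ∧ 1 ≤ MvPowerSeries.coeff (R := ℕ∞) (t.deg f) (μ a) := by
  intro a t
  induction t with
  | leaf a ha =>
      refine ⟨hM.1 ha, ?_⟩
      have hle := ser_le_def.mp (hM.2.1 a ha) (Finsupp.single (f a) 1)
      rw [hann a ha, MvPowerSeries.X_def, MvPowerSeries.coeff_monomial, if_pos rfl] at hle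
      rw [DTree.deg]
      exact hle
  | node r hr σ ch ih =>
      have hbodyI : ∀ i, (r.body i).subst σ ∈ I := fun i => (ih i).1
      obtain ⟨hheadI, hle⟩ := hM.2.2 r hr σ hbodyI
      refine ⟨hheadI, ?_⟩
      have hσS : σ ∈ {σ' : Fin r.nvars → C |
          (∀ i, (r.body i).subst σ' ∈ I) ∧ headAgree r σ σ'} := ⟨hbodyI, fun v _ => rfl⟩
      have h1 : (∏ i, μ ((r.body i).subst σ)) ≤
          setSum {σ' : Fin r.nvars → C | (∀ i, (r.body i).subst σ' ∈ I) ∧ headAgree r σ σ'}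
            (fun σ' => ∏ i : Fin r.nbody, μ ((r.body i).subst σ')) := by
        refine (isLUB_setSum _ _).1 ⟨{σ}, ?_, ?_⟩
        · simpa using hσS
        · simp
      have h2 := h1.trans hle
      have h3 := ser_le_def.mp h2 (∑ i, (ch i).deg f)
      have h4 : (1 : ℕ∞) ≤ ∏ i, MvPowerSeries.coeff (R := ℕ∞) ((ch i).deg f)
          (μ ((r.body i).subst σ)) := by
        rw [ENat.one_le_iff_ne_zero, Finset.prod_ne_zero_iff]
        intro i _
        rw [← ENat.one_le_iff_ne_zero]
        exact (ih i).2
      rw [DTree.deg]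
      exact h4.trans ((coeff_prod_ge _ _).trans h3)

/-- The canonical set-annotation: the set of weights of derivation trees. -/
def muSet {prog : Set (Rule P C)} (db : AnnDB P C (MvPowerSeries X ℕ∞))
    (a : Fact P C) : Set (MvPowerSeries X ℕ∞) :=
  { k | ∃ t : DTree prog db.facts a, t.weight db.ann = k }

lemma muSet_isSetAnnModel {prog : Set (Rule P C)} (db : AnnDB P C (MvPowerSeries X ℕ∞)) :
    IsSetAnnModel prog db {a | Nonempty (DTree prog db.facts a)} (muSet (prog := prog) db) := by
  refine ⟨fun a ha => ⟨.leaf a ha⟩, fun a ha => ⟨.leaf a ha, rfl⟩, ?_⟩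
  intro r hr σ hbody
  refine ⟨⟨.node r hr σ fun i => (hbody i).some⟩, ?_⟩
  intro g hg
  choose t ht using hg
  refine ⟨.node r hr σ t, ?_⟩
  rw [DTree.weight]
  exact Finset.prod_congr rfl fun i _ => ht i

lemma isSetAnnModel_tree {prog : Set (Rule P C)} (db : AnnDB P C (MvPowerSeries X ℕ∞))
    {I : Set (Fact P C)} {μ : Fact P C → Set (MvPowerSeries X ℕ∞)}
    (hM : IsSetAnnModel prog db I μ) :
    ∀ {a : Fact P C} (t : DTree prog db.facts a), a ∈ I ∧ t.weight db.ann ∈ μ a := by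
  intro a t
  induction t with
  | leaf a ha => exact ⟨hM.1 ha, hM.2.1 a ha⟩
  | node r hr σ ch ih =>
      obtain ⟨hheadI, hprod⟩ := hM.2.2 r hr σ (fun i => (ih i).1)
      exact ⟨hheadI, hprod _ fun i => (ih i).2⟩

end Aux

/-- over the semiring `ℕ∞⟦X⟧` of formal power series, with each database fact
annotated by its own variable: (i) a monomial occurs in `AT` iff it occurs in `AM`;
(ii) `SAM` is obtained from `AT` by setting all nonzero coefficients to `1`. -/
theorem statement_2 (P C X : Type) (prog : Set (Rule P C)) (hprog : prog.Finite)
    (db : AnnDB P C (MvPowerSeries X ℕ∞)) (hfin : db.facts.Finite)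
    (f : Fact P C → X) (hinj : Set.InjOn f db.facts)
    (hann : ∀ a ∈ db.facts, db.ann a = MvPowerSeries.X (f a))
    (hann0 : ∀ a ∈ db.facts, db.ann a ≠ 0) (α : Fact P C) :
    (∀ m : X →₀ ℕ,
        MvPowerSeries.coeff (R := ℕ∞) m (AT prog db α) ≠ 0 ↔
          MvPowerSeries.coeff (R := ℕ∞) m (AM prog db α) ≠ 0)
      ∧ ∀ m : X →₀ ℕ,
          MvPowerSeries.coeff (R := ℕ∞) m (SAM prog db α) =
            if MvPowerSeries.coeff (R := ℕ∞) m (AT prog db α) ≠ 0 then 1 else 0 := by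
  constructor
  · -- Part (i)
    intro m
    rw [coeff_AT_ne_zero_iff db f hann α m]
    constructor
    · rintro ⟨t, ht⟩
      have hE : Entails prog db.facts α := tree_entails t
      rw [AM, if_pos hE]
      have h1 : (1 : ℕ∞) ≤ MvPowerSeries.coeff (R := ℕ∞) m
          (setInf { x | ∃ I μ, IsAnnModel prog db I μ ∧ μ α = x }) := by
        have heq : setInf { x | ∃ I μ, IsAnnModel prog db I μ ∧ μ α = x } =
            pGlb { x | ∃ I μ, IsAnnModel prog db I μ ∧ μ α = x } :=
          (isGLB_setInf _).unique (isGLB_pGlb _)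
        rw [heq]
        show (1 : ℕ∞) ≤ sInf _
        refine le_sInf ?_
        rintro y ⟨φ, ⟨I, μ, hM, rfl⟩, rfl⟩
        have := (isAnnModel_tree db f hann hM t).2
        rwa [ht] at this
      intro h0
      rw [h0] at h1
      exact (not_le.mpr (by norm_num : (0:ℕ∞) < 1)) h1
    · intro hAM
      by_contra hno
      apply hAM
      rw [AM]
      split_ifs with hE
      · have hmem : muTop prog db.facts f α ∈
            { x | ∃ I μ, IsAnnModel prog db I μ ∧ μ α = x } :=
          ⟨_, _, muTop_isAnnModel db f hann, rfl⟩
        have hle := ser_le_def.mp ((isGLB_setInf _).1 hmem) m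
        rw [coeff_muTop, if_neg hno] at hle
        exact le_antisymm hle (zero_le)
      · exact map_zero _
  · -- Part (ii)
    intro m
    have hKeq : { k : MvPowerSeries X ℕ∞ | ∀ I μ, IsSetAnnModel prog db I μ → k ∈ μ α } =
        { k | ∃ t : DTree prog db.facts α, t.weight db.ann = k } := by
      ext k
      constructor
      · intro hk
        exact hk _ _ (muSet_isSetAnnModel db)
      · rintro ⟨t, rfl⟩
        intro I μ hM
        exact (isSetAnnModel_tree db hM t).2
    rw [SAM, hKeq]
    have hlub := isLUB_coeff_setSum
      { k : MvPowerSeries X ℕ∞ | ∃ t : DTree prog db.facts α, t.weight db.ann = k } id m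
    by_cases hm : ∃ t : DTree prog db.facts α, t.deg f = m
    · rw [if_pos ((coeff_AT_ne_zero_iff db f hann α m).mpr hm)]
      -- every partial sum is ≤ 1, and the singleton {monomial m 1} gives 1
      refine le_antisymm ?_ ?_
      · refine hlub.2 ?_
        rintro x ⟨F, hF, rfl⟩
        have hterm : ∀ k ∈ F, MvPowerSeries.coeff (R := ℕ∞) m (id k) =
            if k = MvPowerSeries.monomial (R := ℕ∞) m 1 then 1 else 0 := by
          intro k hk
          obtain ⟨t, rfl⟩ := hF hk
          rw [id, weight_eq_monomial db f hann t, MvPowerSeries.coeff_monomial]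
          by_cases hdm : m = t.deg f
          · rw [if_pos hdm, if_pos (by rw [hdm])]
          · rw [if_neg hdm, if_neg ?_]
            intro hmono
            apply hdm
            have := congrArg (MvPowerSeries.coeff (R := ℕ∞) m) hmono
            rw [MvPowerSeries.coeff_monomial, MvPowerSeries.coeff_monomial, if_pos rfl] at this
            by_contra hc
            rw [if_neg hc] at this
            simp at this
        rw [Finset.sum_congr rfl hterm, Finset.sum_ite_eq' F (MvPowerSeries.monomial (R := ℕ∞) m 1)
          (fun _ => (1 : ℕ∞))]
        split_ifs
        · exact le_refl _
        · exact zero_le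
      · obtain ⟨t, ht⟩ := hm
        have hmem : (1 : ℕ∞) ∈ partialSums
            { k : MvPowerSeries X ℕ∞ | ∃ t : DTree prog db.facts α, t.weight db.ann = k }
            (fun k => MvPowerSeries.coeff (R := ℕ∞) m (id k)) := by
          refine ⟨{t.weight db.ann}, by simpa using ⟨t, rfl⟩, ?_⟩
          rw [Finset.sum_singleton, id, weight_eq_monomial db f hann t,
            MvPowerSeries.coeff_monomial, if_pos ht.symm]
        exact hlub.1 hmem
    · rw [if_neg (by simpa using (not_iff_not.mpr (coeff_AT_ne_zero_iff db f hann α m)).mpr hm)]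
      refine le_antisymm ?_ (zero_le)
      refine hlub.2 ?_
      rintro x ⟨F, hF, rfl⟩
      refine le_of_eq (Finset.sum_eq_zero ?_)
      intro k hk
      obtain ⟨t, rfl⟩ := hF hk
      rw [id, weight_eq_monomial db f hann t, MvPowerSeries.coeff_monomial,
        if_neg fun h => hm ⟨t, h.symm⟩]

end Datalog
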